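/- Let m be a positive integer and let c_1, ..., c_m be pairwise distinct positive integers with maximum c*, and let C0 be a real number. Then (1/m) · ∑_{j=1}^{m} (C0 − m·⌈c_j/m⌉) ≥ C0 − c*. -/
import Mathlib

/-- Hermite-type identity: `∑_{k<m} ⌊(N+k)/m⌋ = N`. -/
lemma hermite_sum (m : ℕ) (hm : 0 < m) : ∀ N : ℕ, ∑ k ∈ Finset.range m, (N + k) / m = N := by
  intro N
  induction N with
  | zero =>
    refine Finset.sum_eq_zero fun k hk => ?_
    simp only [Nat.zero_add]
    exact Nat.div_eq_of_lt (Finset.mem_range.mp hk)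
  | succ N ih =>
    have h1 : ∑ k ∈ Finset.range (m + 1), (N + k) / m
        = (∑ k ∈ Finset.range m, (N + k) / m) + (N + m) / m := Finset.sum_range_succ _ _
    have h2 : ∑ k ∈ Finset.range (m + 1), (N + k) / m
        = (∑ k ∈ Finset.range m, (N + (k + 1)) / m) + (N + 0) / m :=
      Finset.sum_range_succ' _ _
    have h3 : (N + m) / m = N / m + 1 := Nat.add_div_right _ hm
    have h4 : ∑ k ∈ Finset.range m, (N + 1 + k) / m
        = ∑ k ∈ Finset.range m, (N + (k + 1)) / m :=
      Finset.sum_congr rfl fun k _ => by rw [show N + 1 + k = N + (k + 1) by omega]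
    simp only [Nat.add_zero] at h2
    omega

/-- Strictly monotone tuples grow at least linearly. -/
lemma strictMono_add_le {m : ℕ} {d : Fin m → ℕ} (hd : StrictMono d) :
    ∀ k : ℕ, ∀ a b : Fin m, (a : ℕ) + k = (b : ℕ) → d a + k ≤ d b := by
  intro k
  induction k with
  | zero =>
    intro a b hab
    have h : a = b := Fin.ext (by omega)
    rw [h]
    omega
  | succ k ih =>
    intro a b hab
    have hb' : (a : ℕ) + k < m := by omega
    have h1 : d a + k ≤ d ⟨(a : ℕ) + k, hb'⟩ := ih a ⟨(a : ℕ) + k, hb'⟩ rfl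
    have h2 : d ⟨(a : ℕ) + k, hb'⟩ < d b := by
      apply hd
      rw [Fin.lt_def]
      simp only [Fin.val_mk]
      omega
    omega

/-- Key combinatorial lemma: distinct values bounded by `cstar` have
`∑ ⌈c j / m⌉ ≤ cstar` (in ℕ, with ceiling written as `(c + (m-1))/m`). -/
lemma key_sum_le (m : ℕ) (hm : 0 < m) (c : Fin m → ℕ)
    (hinj : Function.Injective c) (cstar : ℕ) (hub : ∀ j, c j ≤ cstar) :
    ∑ j, (c j + (m - 1)) / m ≤ cstar := by
  classical
  set σ := Tuple.sort c with hσ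
  set d : Fin m → ℕ := c ∘ σ with hd
  have hmono : Monotone d := Tuple.monotone_sort c
  have hdsm : StrictMono d := hmono.strictMono_of_injective (hinj.comp σ.injective)
  have hsum : ∑ j, (c j + (m - 1)) / m = ∑ j, (d j + (m - 1)) / m :=
    (Equiv.sum_comp σ (fun j => (c j + (m - 1)) / m)).symm
  rw [hsum]
  have htop : ∀ j : Fin m, d j + (m - 1 - (j : ℕ)) ≤ cstar := by
    intro j
    have hlast : (m - 1) < m := by omega
    have := strictMono_add_le hdsm (m - 1 - (j : ℕ)) j ⟨m - 1, hlast⟩ (by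
      simp only [Fin.val_mk]
      omega)
    exact le_trans this (hub _)
  have hterm : ∀ j : Fin m, (d j + (m - 1)) / m ≤ (cstar + (j : ℕ)) / m := by
    intro j
    apply Nat.div_le_div_right
    have := htop j
    have := j.isLt
    omega
  calc ∑ j, (d j + (m - 1)) / m ≤ ∑ j : Fin m, (cstar + (j : ℕ)) / m :=
        Finset.sum_le_sum fun j _ => hterm j
    _ = ∑ k ∈ Finset.range m, (cstar + k) / m := by
        rw [Finset.sum_range fun k => (cstar + k) / m]
    _ = cstar := hermite_sum m hm cstar

/-- Ceiling of a natural division, as an integer. -/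
lemma ceil_nat_div (m : ℕ) (hm : 0 < m) (cj : ℕ) :
    (⌈(cj : ℝ) / m⌉ : ℤ) = ((cj + (m - 1)) / m : ℕ) := by
  set q : ℕ := (cj + (m - 1)) / m with hq
  obtain ⟨r, hr, heq⟩ : ∃ r, r < m ∧ cj + (m - 1) = m * q + r :=
    ⟨_, Nat.mod_lt _ hm, (Nat.div_add_mod (cj + (m - 1)) m).symm⟩
  obtain ⟨t, ht⟩ : ∃ t, m * q = t := ⟨_, rfl⟩
  rw [ht] at heq
  have h1 : cj ≤ q * m := by rw [Nat.mul_comm, ht]; omega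
  have h2 : q * m < cj + m := by rw [Nat.mul_comm, ht]; omega
  have hmR : (0 : ℝ) < m := by exact_mod_cast hm
  rw [Int.ceil_eq_iff]
  constructor
  · rw [lt_div_iff₀ hmR]
    have h2' : (q : ℝ) * m < cj + m := by exact_mod_cast h2
    push_cast
    linarith
  · rw [div_le_iff₀ hmR]
    have h1' : (cj : ℝ) ≤ q * m := by exact_mod_cast h1
    push_cast
    linarith

/-- Lemma 1 (distilled): `(1/m) ∑ j (C0 - m ⌈c j / m⌉) ≥ C0 - cstar`. -/
theorem stmt_1 (m : ℕ) (hm : 0 < m) (c : Fin m → ℕ)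
    (hpos : ∀ j, 0 < c j) (hinj : Function.Injective c)
    (cstar : ℕ) (hub : ∀ j, c j ≤ cstar) (hmem : ∃ j, c j = cstar)
    (C0 : ℝ) :
    (1 / (m : ℝ)) * ∑ j, (C0 - (m : ℝ) * (⌈(c j : ℝ) / m⌉ : ℤ)) ≥ C0 - cstar := by
  have hmR : (0 : ℝ) < m := by exact_mod_cast hm
  have hceil : ∀ j : Fin m, (⌈(c j : ℝ) / m⌉ : ℤ) = ((c j + (m - 1)) / m : ℕ) :=
    fun j => ceil_nat_div m hm (c j)
  have hksum : ∑ j, (c j + (m - 1)) / m ≤ cstar := key_sum_le m hm c hinj cstar hub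
  have hsumR : ∑ j, ((⌈(c j : ℝ) / m⌉ : ℤ) : ℝ) ≤ (cstar : ℝ) := by
    calc ∑ j, ((⌈(c j : ℝ) / m⌉ : ℤ) : ℝ)
        = ∑ j, (((c j + (m - 1)) / m : ℕ) : ℝ) := by
          refine Finset.sum_congr rfl fun j _ => ?_
          rw [hceil j]; norm_cast
      _ = ((∑ j, (c j + (m - 1)) / m : ℕ) : ℝ) := by push_cast; ring
      _ ≤ (cstar : ℝ) := by exact_mod_cast hksum
  have hexpand : ∑ j, (C0 - (m : ℝ) * (⌈(c j : ℝ) / m⌉ : ℤ))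
      = (m : ℝ) * C0 - (m : ℝ) * ∑ j, ((⌈(c j : ℝ) / m⌉ : ℤ) : ℝ) := by
    rw [Finset.sum_sub_distrib, Finset.sum_const, Finset.card_univ, Fintype.card_fin,
      ← Finset.mul_sum]
    push_cast
    ring
  rw [hexpand, ge_iff_le]
  rw [mul_sub, ← mul_assoc, ← mul_assoc, one_div_mul_cancel (ne_of_gt hmR), one_mul, one_mul]
  linarith [hsumR]
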